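/- Let G be a connected graph with n vertices, m edges, and maximum degree Δ, and let k = ⌈(2m−n+1)/Δ⌉. Then ρ_ABC(G) ≤ √(Δ + k − 2). -/

import Mathlib

open scoped Classical
open Finset Matrix

noncomputable def ABCMatrix {n : ℕ} (G : SimpleGraph (Fin n)) : Matrix (Fin n) (Fin n) ℝ :=
  fun i j => if G.Adj i j then
    Real.sqrt (((G.degree i : ℝ) + (G.degree j : ℝ) - 2) / ((G.degree i : ℝ) * (G.degree j : ℝ)))
  else 0

noncomputable def rhoABC {n : ℕ} (G : SimpleGraph (Fin n)) : ℝ :=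
  sSup {r : ℝ | ∃ x : Fin n → ℝ, ∑ i, x i ^ 2 = 1 ∧ r = x ⬝ᵥ (ABCMatrix G).mulVec x}

lemma keyineq (d S T D c : ℝ) (hd1 : 1 ≤ d) (hdD : d ≤ D) (hS1 : S ≤ T)
    (hS2 : S ≤ D * d) (hTc : T ≤ c * D) (hc1 : 1 ≤ c) :
    d * (S + d * (d - 2)) ≤ (D + c - 2) * d ^ 2 := by
  have key : S + d ^ 2 ≤ (D + c) * d := by
    rcases le_total d c with h | h
    · nlinarith [mul_nonneg (show (0:ℝ) ≤ c - d by linarith) (show (0:ℝ) ≤ d by linarith)]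
    · nlinarith [mul_nonneg (show (0:ℝ) ≤ d - c by linarith) (show (0:ℝ) ≤ D - d by linarith)]
  nlinarith [mul_le_mul_of_nonneg_left key (show (0:ℝ) ≤ d by linarith)]

lemma amgm' (a b t : ℝ) (ht : 0 < t) : a * b ≤ (t * a ^ 2 + b ^ 2 / t) / 2 := by
  have key : (t * a ^ 2 + b ^ 2 / t) / 2 - a * b = (t * a - b) ^ 2 / (2 * t) := by
    field_simp; ring
  have h2 : 0 ≤ (t * a - b) ^ 2 / (2 * t) := by positivity
  linarith

lemma rayleigh_le' {n : ℕ} (M : Matrix (Fin n) (Fin n) ℝ)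
    (hsymm : ∀ i j, M i j = M j i) (hnn : ∀ i j, 0 ≤ M i j)
    (w : Fin n → ℝ) (hw : ∀ i, 0 < w i) (C : ℝ)
    (hrow : ∀ i, ∑ j, M i j * w j ≤ C * w i)
    (x : Fin n → ℝ) (hx : ∑ i, x i ^ 2 = 1) :
    x ⬝ᵥ M.mulVec x ≤ C := by
  have key : ∀ i, ∑ j, M i j * (w j / w i) * x i ^ 2 ≤ C * x i ^ 2 := by
    intro i
    have hwi := hw i
    have h1 : ∑ j, M i j * (w j / w i) * x i ^ 2
        = (∑ j, M i j * w j) * (x i ^ 2 / w i) := by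
      rw [Finset.sum_mul]
      refine Finset.sum_congr rfl fun j _ => ?_
      field_simp
      try ring
    rw [h1]
    have h2 : (∑ j, M i j * w j) * (x i ^ 2 / w i) ≤ (C * w i) * (x i ^ 2 / w i) :=
      mul_le_mul_of_nonneg_right (hrow i) (by positivity)
    refine h2.trans_eq ?_
    field_simp
  have key2 : ∑ i, ∑ j, M i j * (w j / w i) * x i ^ 2 ≤ C := by
    calc ∑ i, ∑ j, M i j * (w j / w i) * x i ^ 2 ≤ ∑ i, C * x i ^ 2 :=
          Finset.sum_le_sum fun i _ => key i
      _ = C := by rw [← Finset.mul_sum, hx, mul_one]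
  calc x ⬝ᵥ M.mulVec x = ∑ i, ∑ j, M i j * (x i * x j) := by
        simp only [dotProduct, Matrix.mulVec, Finset.mul_sum]
        refine Finset.sum_congr rfl fun i _ => Finset.sum_congr rfl fun j _ => by ring
    _ ≤ ∑ i, ∑ j, M i j * (((w j / w i) * x i ^ 2 + x j ^ 2 / (w j / w i)) / 2) := by
        refine Finset.sum_le_sum fun i _ => Finset.sum_le_sum fun j _ => ?_
        exact mul_le_mul_of_nonneg_left
          (amgm' (x i) (x j) _ (div_pos (hw j) (hw i))) (hnn i j)
    _ = (∑ i, ∑ j, M i j * (w j / w i) * x i ^ 2) / 2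
        + (∑ i, ∑ j, M i j * (w i / w j) * x j ^ 2) / 2 := by
        rw [← add_div, ← Finset.sum_add_distrib, Finset.sum_div]
        refine Finset.sum_congr rfl fun i _ => ?_
        rw [← Finset.sum_add_distrib, Finset.sum_div]
        refine Finset.sum_congr rfl fun j _ => ?_
        have hi := (hw i).ne'
        have hj := (hw j).ne'
        field_simp
    _ ≤ C / 2 + C / 2 := by
        refine add_le_add (by linarith [key2]) ?_
        have swap : ∑ i, ∑ j, M i j * (w i / w j) * x j ^ 2
            = ∑ i, ∑ j, M i j * (w j / w i) * x i ^ 2 := by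
          rw [Finset.sum_comm]
          refine Finset.sum_congr rfl fun j _ => Finset.sum_congr rfl fun i _ => by
            rw [hsymm i j]
        rw [swap]; linarith [key2]
    _ = C := by ring

theorem stmt6 {n : ℕ} (G : SimpleGraph (Fin n)) (hG : G.Connected) :
    rhoABC G ≤ Real.sqrt ((G.maxDegree : ℝ) +
      ((⌈(2 * (G.edgeFinset.card : ℝ) - (n : ℝ) + 1) / (G.maxDegree : ℝ)⌉ : ℤ) : ℝ) - 2) := by
  set Δ : ℝ := (G.maxDegree : ℝ) with hΔdef
  set m : ℝ := (G.edgeFinset.card : ℝ) with hmdef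
  set c : ℝ := ((⌈(2 * m - (n : ℝ) + 1) / Δ⌉ : ℤ) : ℝ) with hcdef
  have hB : 0 ≤ Real.sqrt (Δ + c - 2) := Real.sqrt_nonneg _
  apply Real.sSup_le _ hB
  rintro r ⟨x, hx, rfl⟩
  rcases le_or_gt n 1 with hn | hn
  · -- trivial case: at most one vertex, no edges
    have hM : ∀ i j, ABCMatrix G i j = 0 := by
      intro i j
      have h1 := i.isLt
      have h2 := j.isLt
      have hij : i = j := Fin.ext (by omega)
      rw [hij]
      simp [ABCMatrix]
    have hz : x ⬝ᵥ (ABCMatrix G).mulVec x = 0 := by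
      simp [dotProduct, Matrix.mulVec, hM]
    rw [hz]; exact hB
  · have hn2 : 2 ≤ n := hn
    haveI : Nontrivial (Fin n) := Fin.nontrivial_iff_two_le.mpr hn2
    have hdeg : ∀ v : Fin n, 0 < G.degree v := by
      intro v
      rw [SimpleGraph.degree_pos_iff_exists_adj]
      obtain ⟨u, hu⟩ := exists_ne v
      obtain ⟨p⟩ := hG.preconnected v u
      refine ⟨p.getVert 1, p.adj_snd ?_⟩
      rw [SimpleGraph.Walk.not_nil_iff_lt_length]
      by_contra h
      push_neg at h
      have h0 : p.length = 0 := by omega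
      exact hu.symm (SimpleGraph.Walk.eq_of_length_eq_zero h0)
    have hd1 : ∀ v : Fin n, (1 : ℝ) ≤ (G.degree v : ℝ) := by
      intro v; exact_mod_cast hdeg v
    have hdΔ : ∀ v : Fin n, (G.degree v : ℝ) ≤ Δ := by
      intro v; rw [hΔdef]; exact_mod_cast G.degree_le_maxDegree v
    have hΔ1 : (1 : ℝ) ≤ Δ := le_trans (hd1 (Classical.arbitrary _)) (hdΔ _)
    have hΔ0 : (0 : ℝ) < Δ := lt_of_lt_of_le one_pos hΔ1
    -- sum of neighbor degrees bound
    have hS : ∀ i : Fin n, ∑ j ∈ G.neighborFinset i, (G.degree j : ℝ)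
        ≤ 2 * m - n + 1 := by
      intro i
      set t : Finset (Fin n) := insert i (G.neighborFinset i) with ht
      have hit : i ∉ G.neighborFinset i := by simp
      have hsub : t ⊆ Finset.univ := Finset.subset_univ t
      have hcard : (Finset.univ \ t).card + (G.degree i + 1) = n := by
        have h1 := Finset.card_sdiff_add_card_eq_card hsub
        rwa [Finset.card_insert_of_notMem hit, SimpleGraph.card_neighborFinset_eq_degree,
          Finset.card_univ, Fintype.card_fin] at h1
      have hsum : (Finset.univ \ t).card + (G.degree i + ∑ j ∈ G.neighborFinset i, G.degree j)
          ≤ 2 * G.edgeFinset.card := by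
        rw [← SimpleGraph.sum_degrees_eq_twice_card_edges, ← Finset.sum_sdiff hsub,
          ht, Finset.sum_insert hit]
        have hle : (Finset.univ \ t).card ≤ ∑ v ∈ Finset.univ \ t, G.degree v := by
          calc (Finset.univ \ t).card = ∑ _v ∈ Finset.univ \ t, 1 := by simp
            _ ≤ _ := Finset.sum_le_sum fun v _ => hdeg v
        rw [ht] at hle
        omega
      have hc' : ((Finset.univ \ t).card : ℝ) + ((G.degree i : ℝ) + 1) = n := by
        exact_mod_cast congrArg (Nat.cast (R := ℝ)) hcard
      have hs' : ((Finset.univ \ t).card : ℝ) + ((G.degree i : ℝ)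
          + ∑ j ∈ G.neighborFinset i, (G.degree j : ℝ)) ≤ 2 * m := by
        rw [hmdef]
        exact_mod_cast hsum
      linarith
    have hT1 : (1 : ℝ) ≤ 2 * m - n + 1 := by
      have h1 : (Finset.univ : Finset (Fin n)).card ≤ ∑ v, G.degree v :=
        calc (Finset.univ : Finset (Fin n)).card = ∑ _v : Fin n, 1 := by simp
          _ ≤ _ := Finset.sum_le_sum fun v _ => hdeg v
      rw [SimpleGraph.sum_degrees_eq_twice_card_edges, Finset.card_univ, Fintype.card_fin] at h1
      have : (n : ℝ) ≤ 2 * m := by rw [hmdef]; exact_mod_cast h1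
      linarith
    have hc1 : (1 : ℝ) ≤ c := by
      have hpos : 0 < (2 * m - (n : ℝ) + 1) / Δ := div_pos (by linarith) hΔ0
      have := Int.ceil_pos.mpr hpos
      rw [hcdef]
      exact_mod_cast this
    have hTc : 2 * m - n + 1 ≤ c * Δ := by
      have h1 : (2 * m - (n : ℝ) + 1) / Δ ≤ c := by rw [hcdef]; exact Int.le_ceil _
      rwa [div_le_iff₀ hΔ0] at h1
    have hΔc2 : 0 ≤ Δ + c - 2 := by linarith
    -- the weighted row bound
    refine rayleigh_le' (ABCMatrix G) ?_ ?_ (fun v => Real.sqrt (G.degree v))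
      (fun v => Real.sqrt_pos.mpr (by linarith [hd1 v])) _ ?_ x hx
    · -- symmetry
      intro i j
      simp only [ABCMatrix]
      by_cases h : G.Adj i j
      · rw [if_pos h, if_pos h.symm]
        congr 1
        ring
      · rw [if_neg h, if_neg (fun h' => h h'.symm)]
    · -- nonneg
      intro i j
      simp only [ABCMatrix]
      split
      · exact Real.sqrt_nonneg _
      · exact le_refl 0
    · -- row bound
      intro i
      have hdi1 := hd1 i
      have hdi0 : (0 : ℝ) < (G.degree i : ℝ) := by linarith
      have hsdi : (0 : ℝ) < Real.sqrt (G.degree i) := Real.sqrt_pos.mpr hdi0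
      have e1 : ∑ j, ABCMatrix G i j * Real.sqrt (G.degree j)
          = ∑ j ∈ G.neighborFinset i,
            Real.sqrt ((G.degree i : ℝ) + (G.degree j : ℝ) - 2) / Real.sqrt (G.degree i) := by
        rw [← Finset.sum_subset (Finset.subset_univ (G.neighborFinset i))
          (fun j _ hj => ?_)]
        · refine Finset.sum_congr rfl fun j hj => ?_
          have hadj : G.Adj i j := by rwa [← SimpleGraph.mem_neighborFinset]
          have hdj1 := hd1 j
          have hdj0 : (0 : ℝ) < (G.degree j : ℝ) := by linarith
          have hX : (0 : ℝ) ≤ (G.degree i : ℝ) + (G.degree j : ℝ) - 2 := by linarith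
          simp only [ABCMatrix, if_pos hadj]
          rw [← Real.sqrt_mul (by positivity) ((G.degree j : ℝ))]
          rw [show ((G.degree i : ℝ) + (G.degree j : ℝ) - 2) / ((G.degree i : ℝ) * (G.degree j : ℝ))
              * (G.degree j : ℝ) = ((G.degree i : ℝ) + (G.degree j : ℝ) - 2) / (G.degree i : ℝ)
            from by field_simp]
          rw [Real.sqrt_div hX]
        · have hadj : ¬ G.Adj i j := by rwa [SimpleGraph.mem_neighborFinset] at hj
          simp [ABCMatrix, hadj]
      rw [e1, ← Finset.sum_div, div_le_iff₀ hsdi, mul_assoc,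
        Real.mul_self_sqrt hdi0.le]
      -- now: ∑ sqrt (di + dj - 2) ≤ sqrt (Δ + c - 2) * di
      set A : ℝ := ∑ j ∈ G.neighborFinset i,
        Real.sqrt ((G.degree i : ℝ) + (G.degree j : ℝ) - 2) with hA
      have hAnn : 0 ≤ A := Finset.sum_nonneg fun j _ => Real.sqrt_nonneg _
      have hsq : A ^ 2 ≤ (Δ + c - 2) * ((G.degree i : ℝ)) ^ 2 := by
        have cs := sq_sum_le_card_mul_sum_sq (s := G.neighborFinset i)
          (f := fun j => Real.sqrt ((G.degree i : ℝ) + (G.degree j : ℝ) - 2))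
        have e2 : ∑ j ∈ G.neighborFinset i,
            Real.sqrt ((G.degree i : ℝ) + (G.degree j : ℝ) - 2) ^ 2
            = ∑ j ∈ G.neighborFinset i, ((G.degree i : ℝ) + (G.degree j : ℝ) - 2) := by
          refine Finset.sum_congr rfl fun j _ => ?_
          have hdj1 := hd1 j
          exact Real.sq_sqrt (by linarith)
        have hcard : ((G.neighborFinset i).card : ℝ) = (G.degree i : ℝ) := by
          exact_mod_cast congrArg (Nat.cast (R := ℝ)) (G.card_neighborFinset_eq_degree i)
        have e3 : ∑ j ∈ G.neighborFinset i, ((G.degree i : ℝ) + (G.degree j : ℝ) - 2)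
            = (∑ j ∈ G.neighborFinset i, (G.degree j : ℝ))
              + (G.degree i : ℝ) * ((G.degree i : ℝ) - 2) := by
          calc ∑ j ∈ G.neighborFinset i, ((G.degree i : ℝ) + (G.degree j : ℝ) - 2)
              = ∑ j ∈ G.neighborFinset i, ((G.degree j : ℝ) + ((G.degree i : ℝ) - 2)) :=
                Finset.sum_congr rfl fun j _ => by ring
            _ = (∑ j ∈ G.neighborFinset i, (G.degree j : ℝ))
                + ((G.neighborFinset i).card : ℝ) * ((G.degree i : ℝ) - 2) := by
                rw [Finset.sum_add_distrib, Finset.sum_const, nsmul_eq_mul]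
            _ = _ := by rw [hcard]
        rw [e2, e3, hcard] at cs
        refine le_trans cs ?_
        -- main algebraic inequality
        set S : ℝ := ∑ j ∈ G.neighborFinset i, (G.degree j : ℝ) with hSdef
        have hS1 : S ≤ 2 * m - n + 1 := hS i
        have hS2 : S ≤ Δ * (G.degree i : ℝ) := by
          rw [hSdef]
          calc ∑ j ∈ G.neighborFinset i, (G.degree j : ℝ)
              ≤ ∑ _j ∈ G.neighborFinset i, Δ := Finset.sum_le_sum fun j _ => hdΔ j
            _ = Δ * (G.degree i : ℝ) := by
                rw [Finset.sum_const, nsmul_eq_mul, hcard]; ring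
        exact keyineq _ _ _ _ _ hdi1 (hdΔ i) hS1 hS2 hTc hc1
      calc A = Real.sqrt (A ^ 2) := (Real.sqrt_sq hAnn).symm
        _ ≤ Real.sqrt ((Δ + c - 2) * ((G.degree i : ℝ)) ^ 2) := Real.sqrt_le_sqrt hsq
        _ = Real.sqrt (Δ + c - 2) * (G.degree i : ℝ) := by
            rw [Real.sqrt_mul hΔc2, Real.sqrt_sq hdi0.le]
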